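/- Let E ⊆ ℂ^a ⊗ ℂ^b be a linear space of matrices with 1 ≤ r ≤ min(a,b) − 2, such that the rank-at-most-r locus E_r has codimension 1 in E and some matrix in E has rank > r+1. Then the hypersurface E_r contains no irreducible hypersurface component of degree k > r/2 + 1. -/

import Mathlib

open MvPolynomial Matrix

/-- The dimension (over `ℂ`, in the sense of algebraic geometry) of a subset
`S ⊆ ℂ^σ`: the Krull dimension of the coordinate ring of its Zariski closure. -/
noncomputable def adim {σ : Type} (S : Set (σ → ℂ)) : ℕ :=
  (WithTop.untopD 0 (WithBot.unbotD 0 (ringKrullDim ((MvPolynomial σ ℂ) ⧸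
      Ideal.span {p : MvPolynomial σ ℂ | ∀ x ∈ S, MvPolynomial.eval x p = 0}))))

/- ### Auxiliary lemmas -/

lemma aux_degree_add {σ : Type*} (u v : σ →₀ ℕ) :
    (u + v).degree = u.degree + v.degree := by
  classical
  have h : ∀ d : σ →₀ ℕ, d.degree = d.sum fun _ e => e := fun d => rfl
  rw [h, h, h]
  exact Finsupp.sum_add_index' (fun _ => rfl) (fun _ _ _ => rfl)

lemma aux_top_comp_ne_zero {σ : Type*} {R : Type*} [CommSemiring R]
    {p : MvPolynomial σ R} (hp : p ≠ 0) :
    homogeneousComponent p.totalDegree p ≠ 0 := by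
  classical
  obtain ⟨m, hm, hdeg⟩ := Finset.exists_mem_eq_sup p.support
    (MvPolynomial.support_nonempty.mpr hp) (fun s => s.sum fun _ e => e)
  have hmd : m.degree = p.totalDegree := by
    rw [MvPolynomial.totalDegree, hdeg]; rfl
  intro h
  have := MvPolynomial.coeff_homogeneousComponent (n := p.totalDegree) (φ := p) m
  rw [h, if_pos hmd] at this
  exact (MvPolynomial.mem_support_iff.mp hm) this.symm

lemma aux_homComp_top_mul {σ : Type*} {R : Type*} [CommSemiring R]
    (p q : MvPolynomial σ R) :
    homogeneousComponent (p.totalDegree + q.totalDegree) (p * q) =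
      homogeneousComponent p.totalDegree p * homogeneousComponent q.totalDegree q := by
  classical
  ext m
  by_cases hm : m.degree = p.totalDegree + q.totalDegree
  · rw [MvPolynomial.coeff_homogeneousComponent, if_pos hm, MvPolynomial.coeff_mul,
      MvPolynomial.coeff_mul]
    refine Finset.sum_congr rfl ?_
    rintro ⟨u, v⟩ huv
    rw [Finset.HasAntidiagonal.mem_antidiagonal] at huv
    rw [MvPolynomial.coeff_homogeneousComponent, MvPolynomial.coeff_homogeneousComponent]
    have hsum : u.degree + v.degree = p.totalDegree + q.totalDegree := by
      rw [← aux_degree_add, huv, hm]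
    by_cases hu : u.degree = p.totalDegree
    · have hv : v.degree = q.totalDegree := by omega
      rw [if_pos hu, if_pos hv]
    · rcases Nat.lt_or_ge p.totalDegree u.degree with h | h
      · have hz : MvPolynomial.coeff u p = 0 :=
          MvPolynomial.coeff_eq_zero_of_totalDegree_lt h
        rw [hz, zero_mul, if_neg hu, zero_mul]
      · have hv : q.totalDegree < v.degree := by omega
        have hz : MvPolynomial.coeff v q = 0 :=
          MvPolynomial.coeff_eq_zero_of_totalDegree_lt hv
        rw [hz, mul_zero, if_neg hu, zero_mul]
  · rw [MvPolynomial.coeff_homogeneousComponent, if_neg hm, MvPolynomial.coeff_mul]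
    symm
    refine Finset.sum_eq_zero ?_
    rintro ⟨u, v⟩ huv
    rw [Finset.HasAntidiagonal.mem_antidiagonal] at huv
    rw [MvPolynomial.coeff_homogeneousComponent, MvPolynomial.coeff_homogeneousComponent]
    by_cases hu : u.degree = p.totalDegree
    · have hv : ¬ v.degree = q.totalDegree := by
        intro hv
        exact hm (by rw [← huv, aux_degree_add, hu, hv])
      rw [if_neg hv, mul_zero]
    · rw [if_neg hu, zero_mul]

lemma aux_totalDegree_mul {σ : Type*} {R : Type*} [CommRing R] [IsDomain R]
    {p q : MvPolynomial σ R} (hp : p ≠ 0) (hq : q ≠ 0) :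
    (p * q).totalDegree = p.totalDegree + q.totalDegree := by
  refine le_antisymm (MvPolynomial.totalDegree_mul p q) ?_
  by_contra h
  push_neg at h
  have h0 := MvPolynomial.homogeneousComponent_eq_zero
    (p.totalDegree + q.totalDegree) (p * q) h
  rw [aux_homComp_top_mul] at h0
  exact mul_ne_zero (aux_top_comp_ne_zero hp) (aux_top_comp_ne_zero hq) h0

/-- From `k ≤ rank A` one can select `k` columns of `A` that are linearly independent. -/
lemma aux_exists_cols {K : Type*} [Field K] {m n : Type*} [Fintype m] [Fintype n]
    [DecidableEq n] (A : Matrix m n K) (k : ℕ) (h : k ≤ A.rank) :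
    ∃ g : Fin k → n, Function.Injective g ∧ LinearIndependent K (fun j => Aᵀ (g j)) := by
  classical
  rw [Matrix.rank_eq_finrank_span_cols] at h
  obtain ⟨s, hs_sub, hs_span, hs_li⟩ := exists_linearIndependent K (Set.range Aᵀ)
  have hsfin : s.Finite := (Set.finite_range Aᵀ).subset hs_sub
  haveI : Fintype s := hsfin.fintype
  have hcard : Module.finrank K (Submodule.span K s) = s.toFinset.card :=
    finrank_span_set_eq_card hs_li
  have hk : k ≤ Fintype.card s := by
    rw [← Set.toFinset_card]
    rw [← hcard, hs_span]
    exact h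
  obtain ⟨e⟩ : Nonempty (Fin k ↪ s) :=
    Function.Embedding.nonempty_of_card_le (by simpa using hk)
  have hchoose : ∀ y : s, ∃ i : n, Aᵀ i = (y : m → K) := fun y => hs_sub y.2
  choose c hc using hchoose
  refine ⟨fun j => c (e j), ?_, ?_⟩
  · intro j₁ j₂ hj
    have hj' : c (e j₁) = c (e j₂) := hj
    have h1 : Aᵀ (c (e j₁)) = Aᵀ (c (e j₂)) := by rw [hj']
    rw [hc, hc] at h1
    exact e.injective (Subtype.ext h1)
  · have : (fun j => Aᵀ (c (e j))) = fun j => ((e j : s) : m → K) := by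
      funext j; exact hc (e j)
    rw [this]
    exact hs_li.comp e e.injective

/-- A square matrix over a field with linearly independent columns has nonzero determinant. -/
lemma aux_det_ne_zero_of_cols {K : Type*} [Field K] {k : ℕ}
    (C : Matrix (Fin k) (Fin k) K) (h : LinearIndependent K (fun j => Cᵀ j)) :
    C.det ≠ 0 := by
  intro h0
  obtain ⟨v, hv, hmul⟩ := (Matrix.exists_mulVec_eq_zero_iff).mpr h0
  have : ∀ j, v j = 0 := by
    have hli := Fintype.linearIndependent_iff.mp h
    refine hli v ?_
    funext i
    have := congrFun hmul i
    simpa [Matrix.mulVec, dotProduct, Finset.sum_apply, mul_comm] using this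
  exact hv (funext this)

/-- From `k ≤ rank A` one can select a `k × k` submatrix with nonzero determinant. -/
lemma aux_exists_submatrix {K : Type*} [Field K] {m n : Type*} [Fintype m] [Fintype n]
    [DecidableEq m] [DecidableEq n] (A : Matrix m n K) (k : ℕ) (h : k ≤ A.rank) :
    ∃ (f : Fin k → m) (g : Fin k → n), Function.Injective f ∧ Function.Injective g ∧
      (A.submatrix f g).det ≠ 0 := by
  classical
  obtain ⟨g, hg, hcols⟩ := aux_exists_cols A k h
  set B : Matrix m (Fin k) K := A.submatrix id g with hB
  have hBT : LinearIndependent K (fun j => Bᵀ j) := by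
    have : (fun j : Fin k => Bᵀ j) = fun j => Aᵀ (g j) := by
      funext j; funext i; rfl
    rw [this]; exact hcols
  have hrankBT : Bᵀ.rank = k := by
    have := hBT.rank_matrix
    rw [Fintype.card_fin] at this
    exact this
  have hrankB : k ≤ Bᵀ.rank := le_of_eq hrankBT.symm
  obtain ⟨f, hf, hrows⟩ := aux_exists_cols Bᵀ k hrankB
  refine ⟨f, g, hf, hg, ?_⟩
  have hsub : A.submatrix f g = B.submatrix f id := by
    ext i j; rfl
  rw [hsub]
  have hdetT : (B.submatrix f id)ᵀ.det ≠ 0 := by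
    apply aux_det_ne_zero_of_cols
    have : (fun j : Fin k => ((B.submatrix f id)ᵀ)ᵀ j) = fun j => Bᵀᵀ (f j) := by
      funext j; funext i; rfl
    rw [this]
    exact hrows
  rw [Matrix.det_transpose] at hdetT
  exact hdetT

/-- Corollary 3.3(1) of the paper: if `E` is a space of `a×b` matrices of linear forms with
`1 ≤ r ≤ min(a,b) - 2`, `codim E_r = 1`, and some matrix in `E` has rank `> r+1`, then the
hypersurface `E_r` has no irreducible component of degree `k > r/2 + 1`, i.e. there is no
irreducible polynomial of degree `> r/2 + 1` dividing all `(r+1)×(r+1)` minors of `E`. -/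
theorem stmt3 (a b c r : ℕ) (hr1 : 1 ≤ r) (hr2 : r + 2 ≤ min a b)
    (E : Matrix (Fin a) (Fin b) (MvPolynomial (Fin c) ℂ))
    (hlin : ∀ i j, (E i j).IsHomogeneous 1)
    (hnb : ∃ x : Fin c → ℂ, r + 1 < (E.map (MvPolynomial.eval x)).rank)
    (hcodim : c = adim {x : Fin c → ℂ | (E.map (MvPolynomial.eval x)).rank ≤ r} + 1) :
    ¬ ∃ P : MvPolynomial (Fin c) ℂ, Irreducible P ∧ r + 2 < 2 * P.totalDegree ∧
      ∀ (f : Fin (r + 1) → Fin a) (g : Fin (r + 1) → Fin b),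
        Function.Injective f → Function.Injective g → P ∣ (E.submatrix f g).det := by
  classical
  rintro ⟨P, hPirr, hPdeg, hPdvd⟩
  obtain ⟨x, hx⟩ := hnb
  -- find an invertible (r+2)×(r+2) submatrix of the evaluated matrix
  have hx' : r + 2 ≤ (E.map (MvPolynomial.eval x)).rank := hx
  obtain ⟨f, g, hf, hg, hdet⟩ :=
    aux_exists_submatrix (E.map (MvPolynomial.eval x)) (r + 2) hx'
  set M : Matrix (Fin (r + 2)) (Fin (r + 2)) (MvPolynomial (Fin c) ℂ) :=
    E.submatrix f g with hM
  -- the determinant of M is a nonzero polynomial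
  have hevaldet : MvPolynomial.eval x M.det =
      ((E.map (MvPolynomial.eval x)).submatrix f g).det := by
    rw [RingHom.map_det (MvPolynomial.eval x) M]
    congr 1
  have hMdet : M.det ≠ 0 := by
    intro h0
    rw [h0, map_zero] at hevaldet
    exact hdet hevaldet.symm
  -- P is prime
  have hPprime : Prime P := UniqueFactorizationMonoid.irreducible_iff_prime.mp hPirr
  have hP0 : P ≠ 0 := hPprime.ne_zero
  -- P divides every entry of the adjugate of M
  have hadj : ∀ i j, P ∣ M.adjugate i j := by
    intro i j
    rw [Matrix.adjugate_fin_succ_eq_det_submatrix]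
    apply Dvd.dvd.mul_left
    have : M.submatrix j.succAbove i.succAbove =
        E.submatrix (f ∘ j.succAbove) (g ∘ i.succAbove) := by
      ext i' j'; rfl
    rw [this]
    exact hPdvd _ _ (hf.comp (Fin.succAbove_right_injective))
      (hg.comp (Fin.succAbove_right_injective))
  -- extract the quotient matrix
  choose B hB using fun i => fun j => hadj i j
  have hadjB : M.adjugate = P • (Matrix.of B) := by
    refine Matrix.ext (fun i j => ?_)
    rw [Matrix.smul_apply, smul_eq_mul]
    exact hB i j
  -- det M ^ (r+1) = P ^ (r+2) * det B
  have hkey : M.det ^ (r + 1) = P ^ (r + 2) * (Matrix.of B).det := by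
    have h1 : M.adjugate.det = M.det ^ (r + 1) := by
      rw [Matrix.det_adjugate]
      congr 1
      simp
    rw [← h1, hadjB, Matrix.det_smul]
    congr 2
    simp
  -- P divides det M
  have hPdvdM : P ∣ M.det := by
    apply hPprime.dvd_of_dvd_pow (n := r + 1)
    rw [hkey]
    exact Dvd.dvd.mul_right (dvd_pow_self P (by omega)) _
  obtain ⟨u, hu⟩ := hPdvdM
  -- P divides u as well, so P^2 divides det M
  have hPu : P ∣ u := by
    apply hPprime.dvd_of_dvd_pow (n := r + 1)
    have h2 : P ^ (r + 1) * u ^ (r + 1) = P ^ (r + 1) * (P * (Matrix.of B).det) := by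
      rw [← mul_pow, ← hu, hkey]; ring
    have h3 : u ^ (r + 1) = P * (Matrix.of B).det :=
      mul_left_cancel₀ (pow_ne_zero _ hP0) h2
    rw [h3]
    exact Dvd.intro _ rfl
  obtain ⟨t, ht⟩ := hPu
  have hMfact : M.det = P * (P * t) := by rw [hu, ht]
  -- nonzero factors
  have hPt : P * t ≠ 0 := by
    intro h0
    rw [hMfact, h0, mul_zero] at hMdet
    exact hMdet rfl
  -- degree lower bound : 2 * deg P ≤ deg det M
  have hdeg_lower : 2 * P.totalDegree ≤ M.det.totalDegree := by
    rw [hMfact, aux_totalDegree_mul hP0 hPt]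
    have := MvPolynomial.totalDegree_mul P t
    rcases eq_or_ne t 0 with rfl | ht0
    · exact absurd (by simp) hPt
    · rw [aux_totalDegree_mul hP0 ht0]
      omega
  -- degree upper bound : deg det M ≤ r + 2
  have hdeg_upper : M.det.totalDegree ≤ r + 2 := by
    rw [Matrix.det_apply']
    refine (MvPolynomial.totalDegree_finset_sum _ _).trans ?_
    apply Finset.sup_le
    intro σ _
    refine (MvPolynomial.totalDegree_mul _ _).trans ?_
    have hsign : (((Equiv.Perm.sign σ : ℤ) : MvPolynomial (Fin c) ℂ)).totalDegree = 0 := by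
      rw [← map_intCast (MvPolynomial.C : ℂ →+* MvPolynomial (Fin c) ℂ)]
      exact MvPolynomial.totalDegree_C _
    rw [hsign, zero_add]
    refine (MvPolynomial.totalDegree_finset_prod _ _).trans ?_
    have hone : ∀ i : Fin (r + 2), (M (σ i) i).totalDegree ≤ 1 := by
      intro i
      exact (hlin (f (σ i)) (g i)).totalDegree_le
    calc ∑ i : Fin (r + 2), (M (σ i) i).totalDegree
        ≤ ∑ _i : Fin (r + 2), 1 := Finset.sum_le_sum (fun i _ => hone i)
      _ = r + 2 := by simp
  omega
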